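/- Let U ⊆ ℝⁿ be bounded open, T > 0, and let w, w′ ∈ C²,¹(U_T) ∩ C(closure of U_T) satisfy w_t − Q̃w ≤ w′_t − Q̃w′ in U_T, where Q̃v = [Δv − D²v(Dv,Dv)/(1+|Dv|²) + |Dv|²]/√(1+|Dv|²). If w ≤ w′ on the parabolic boundary Γ_T, then w ≤ w′ in U_T. -/

import Mathlib

open Real Set

/-- Partial derivative of `f` in the `i`-th coordinate direction. -/
noncomputable def pd {n : ℕ} (f : EuclideanSpace ℝ (Fin n) → ℝ) (i : Fin n)
    (x : EuclideanSpace ℝ (Fin n)) : ℝ :=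
  fderiv ℝ f x (EuclideanSpace.single i 1)

/-- Squared norm of the gradient of `f` at `x`. -/
noncomputable def gradNormSq {n : ℕ} (f : EuclideanSpace ℝ (Fin n) → ℝ)
    (x : EuclideanSpace ℝ (Fin n)) : ℝ :=
  ∑ i, (pd f i x) ^ 2

/-- The divergence of the relativistic heat flux `u Du / √(u² + |Du|²)`. -/
noncomputable def relDiv {n : ℕ} (u : EuclideanSpace ℝ (Fin n) → ℝ)
    (x : EuclideanSpace ℝ (Fin n)) : ℝ :=
  ∑ i, pd (fun y => u y * pd u i y / Real.sqrt ((u y) ^ 2 + gradNormSq u y)) i x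

/-- The transformed quasilinear operator
`Q w = Δw − D²w(Dw,Dw)/(1+|Dw|²) + |Dw|²`. -/
noncomputable def Qop {n : ℕ} (w : EuclideanSpace ℝ (Fin n) → ℝ)
    (x : EuclideanSpace ℝ (Fin n)) : ℝ :=
  (∑ i, pd (pd w i) i x)
    - (∑ i, ∑ j, pd (pd w i) j x * pd w i x * pd w j x) / (1 + gradNormSq w x)
    + gradNormSq w x

/-- The normalized operator `Q̃ w = Q w / √(1+|Dw|²)`. -/
noncomputable def Qtil {n : ℕ} (w : EuclideanSpace ℝ (Fin n) → ℝ)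
    (x : EuclideanSpace ℝ (Fin n)) : ℝ :=
  Qop w x / Real.sqrt (1 + gradNormSq w x)

open Filter Topology

lemma deriv_nonneg_of_isMaxOn_Ioc {f : ℝ → ℝ} {a b : ℝ} (hab : a < b)
    (hf : DifferentiableAt ℝ f b) (hmax : ∀ s ∈ Set.Ioc a b, f s ≤ f b) :
    0 ≤ deriv f b := by
  have hseg : segment ℝ b (b + (a - b)/2) ⊆ Set.Ioc a b := by
    have h1 : b + (a - b)/2 ≤ b := by linarith
    rw [segment_symm, segment_eq_Icc h1]
    intro y hy
    exact ⟨by rcases hy with ⟨h2, h3⟩; linarith, hy.2⟩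
  have hmem : ((a - b)/2) ∈ posTangentConeAt (Set.Ioc a b) b :=
    mem_posTangentConeAt_of_segment_subset hseg
  have hloc : IsLocalMaxOn f (Set.Ioc a b) b :=
    eventually_mem_nhdsWithin.mono (fun y hy => hmax y hy)
  have h2 := hloc.hasFDerivWithinAt_nonpos
    hf.hasDerivAt.hasFDerivAt.hasFDerivWithinAt hmem
  simp only [ContinuousLinearMap.toSpanSingleton_apply, smul_eq_mul] at h2
  nlinarith [h2]

lemma secondDeriv_nonpos_of_isLocalMax {φ : ℝ → ℝ}
    (hφ : ∀ᶠ s in 𝓝 (0:ℝ), DifferentiableAt ℝ φ s)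
    (hφ' : DifferentiableAt ℝ (deriv φ) 0)
    (hmax : IsLocalMax φ 0) : deriv (deriv φ) 0 ≤ 0 := by
  by_contra hc
  push_neg at hc
  have h0 : deriv φ 0 = 0 := hmax.deriv_eq_zero
  have hslope : ∀ᶠ s in 𝓝[>] (0:ℝ), 0 < deriv φ s := by
    have h1 := hφ'.hasDerivAt
    rw [hasDerivAt_iff_tendsto_slope] at h1
    have h2 : ∀ᶠ s in 𝓝[≠] (0:ℝ), 0 < slope (deriv φ) 0 s :=
      h1.eventually (eventually_gt_nhds hc)
    have h3 : 𝓝[>] (0:ℝ) ≤ 𝓝[≠] (0:ℝ) :=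
      nhdsWithin_mono _ (fun s hs => ne_of_gt hs)
    filter_upwards [h3 h2, self_mem_nhdsWithin] with s hs hs'
    rw [slope_def_field, h0, sub_zero, sub_zero] at hs
    have hspos : (0:ℝ) < s := hs'
    rcases div_pos_iff.mp hs with h | h
    · exact h.1
    · linarith [h.2]
  rw [eventually_nhdsWithin_iff] at hslope
  have hall : ∀ᶠ s in 𝓝 (0:ℝ),
      DifferentiableAt ℝ φ s ∧ φ s ≤ φ 0 ∧ (s ∈ Set.Ioi (0:ℝ) → 0 < deriv φ s) :=
    hφ.and (hmax.and hslope)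
  rw [Metric.eventually_nhds_iff] at hall
  obtain ⟨δ, hδ, hδall⟩ := hall
  have hmemd : ∀ s ∈ Set.Icc (0:ℝ) (δ/2), dist s 0 < δ := by
    intro s hs
    rw [Real.dist_eq, sub_zero, abs_of_nonneg hs.1]
    linarith [hs.2]
  have hmono : StrictMonoOn φ (Set.Icc 0 (δ/2)) := by
    apply strictMonoOn_of_deriv_pos (convex_Icc _ _)
    · intro s hs
      exact ((hδall (hmemd s hs)).1).continuousAt.continuousWithinAt
    · intro s hs
      rw [interior_Icc] at hs
      have := hδall (hmemd s ⟨hs.1.le, hs.2.le⟩)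
      exact this.2.2 hs.1
  have h4 : φ 0 < φ (δ/2) :=
    hmono ⟨le_refl 0, by linarith⟩ ⟨by linarith, le_refl _⟩ (by linarith)
  have h5 : φ (δ/2) ≤ φ 0 := (hδall (hmemd (δ/2) ⟨by linarith, le_refl _⟩)).2.1
  linarith

lemma psd_quadratic_le_trace {n : ℕ} (M : Fin n → Fin n → ℝ) (p : Fin n → ℝ)
    (hpsd : ∀ ξ : Fin n → ℝ, 0 ≤ ∑ i, ∑ j, ξ i * ξ j * M i j) :
    ∑ i, ∑ j, p i * p j * M i j ≤ (∑ i, p i ^ 2) * (∑ i, M i i) := by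
  have hdiag : ∀ i, 0 ≤ M i i := by
    intro i
    have := hpsd (Pi.single i 1)
    simpa [Pi.single_apply, Finset.sum_ite_eq', ite_and] using this
  set s := ∑ i, ∑ j, p i * p j * M i j with hs
  have hs0 : 0 ≤ s := hpsd p
  have htr : 0 ≤ ∑ i, M i i := Finset.sum_nonneg fun i _ => hdiag i
  rcases eq_or_lt_of_le hs0 with hz | hpos
  · rw [← hz]; positivity
  have hci : ∀ i, (∑ j, p j * (M i j + M j i))^2 ≤ 4 * M i i * s := by
    intro i
    have hquad : ∀ t : ℝ, 0 ≤ M i i * (t * t) + (∑ j, p j * (M i j + M j i)) * t + s := by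
      intro t
      have h0 := hpsd (fun j => p j + t * (Pi.single i 1 : Fin n → ℝ) j)
      have hexp : ∑ a, ∑ b, (p a + t * (Pi.single i 1 : Fin n → ℝ) a) *
            (p b + t * (Pi.single i 1 : Fin n → ℝ) b) * M a b
          = M i i * (t * t) + (∑ j, p j * (M i j + M j i)) * t + s := by
        simp only [Pi.single_apply, mul_ite, mul_one, mul_zero, add_mul, mul_add,
          Finset.sum_add_distrib, ite_mul, zero_mul, Finset.sum_ite_irrel,
          Finset.sum_const_zero, Finset.sum_ite_eq, Finset.sum_ite_eq',
          Finset.mem_univ, if_true, Finset.mul_sum, Finset.sum_mul]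
        rw [show ∑ x, t * p x * M i x = ∑ x, p x * M i x * t from
            Finset.sum_congr rfl (fun x _ => by ring),
          show ∑ x, p x * t * M x i = ∑ x, p x * M x i * t from
            Finset.sum_congr rfl (fun x _ => by ring)]
        rw [hs]; ring
      rw [← hexp]; exact h0
    have hd := discrim_le_zero hquad
    rw [discrim] at hd
    nlinarith [hd]
  have hcabs : ∀ i, |∑ j, p j * (M i j + M j i)| ≤ 2 * Real.sqrt (M i i) * Real.sqrt s := by
    intro i
    have h1 : |∑ j, p j * (M i j + M j i)| = Real.sqrt ((∑ j, p j * (M i j + M j i))^2) :=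
      (Real.sqrt_sq_eq_abs _).symm
    rw [h1]
    calc Real.sqrt ((∑ j, p j * (M i j + M j i))^2)
        ≤ Real.sqrt (4 * M i i * s) := Real.sqrt_le_sqrt (hci i)
      _ = 2 * Real.sqrt (M i i) * Real.sqrt s := by
          rw [show (4 : ℝ) * M i i * s = (2*Real.sqrt (M i i) * Real.sqrt s)^2 by
            rw [mul_pow, mul_pow, Real.sq_sqrt (hdiag i), Real.sq_sqrt hs0]; ring]
          exact Real.sqrt_sq (by positivity)
  have hsum2 : ∑ i, p i * (∑ j, p j * (M i j + M j i)) = 2 * s := by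
    simp only [mul_add, Finset.mul_sum, Finset.sum_add_distrib]
    have h2 : ∑ i, ∑ j, p i * (p j * M j i) = s := by
      rw [Finset.sum_comm, hs]
      exact Finset.sum_congr rfl fun a _ => Finset.sum_congr rfl fun b _ => by ring
    have h1 : ∑ i, ∑ j, p i * (p j * M i j) = s := by
      rw [hs]
      exact Finset.sum_congr rfl fun a _ => Finset.sum_congr rfl fun b _ => by ring
    rw [h1, h2]; ring
  set B := ∑ i, |p i| * Real.sqrt (M i i) with hB
  have h2s : 2 * s ≤ 2 * B * Real.sqrt s := by
    rw [← hsum2]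
    calc ∑ i, p i * (∑ j, p j * (M i j + M j i))
        ≤ ∑ i, |p i| * (2 * Real.sqrt (M i i) * Real.sqrt s) := by
          apply Finset.sum_le_sum
          intro i _
          calc p i * (∑ j, p j * (M i j + M j i))
              ≤ |p i * (∑ j, p j * (M i j + M j i))| := le_abs_self _
            _ = |p i| * |∑ j, p j * (M i j + M j i)| := abs_mul _ _
            _ ≤ |p i| * (2 * Real.sqrt (M i i) * Real.sqrt s) := by
                apply mul_le_mul_of_nonneg_left (hcabs i) (abs_nonneg _)
      _ = 2 * B * Real.sqrt s := by
          rw [hB, show (2 * ∑ i, |p i| * Real.sqrt (M i i)) * Real.sqrt s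
              = ∑ i, (|p i| * Real.sqrt (M i i)) * (2 * Real.sqrt s) by
            rw [Finset.mul_sum, Finset.sum_mul]
            exact Finset.sum_congr rfl fun i _ => by ring]
          exact Finset.sum_congr rfl fun i _ => by ring
  have hsqrtpos : 0 < Real.sqrt s := Real.sqrt_pos.2 hpos
  have hsB : Real.sqrt s ≤ B := by
    have : 2 * Real.sqrt s * Real.sqrt s ≤ 2 * B * Real.sqrt s := by
      rw [show 2 * Real.sqrt s * Real.sqrt s = 2 * s by rw [mul_assoc, Real.mul_self_sqrt hs0]]
      exact h2s
    have := le_of_mul_le_mul_right this hsqrtpos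
    linarith
  calc s = (Real.sqrt s)^2 := (Real.sq_sqrt hs0).symm
    _ ≤ B^2 := by apply pow_le_pow_left₀ hsqrtpos.le hsB
    _ ≤ (∑ i, p i ^ 2) * (∑ i, M i i) := by
        rw [hB]
        calc (∑ i, |p i| * Real.sqrt (M i i))^2
            ≤ (∑ i, |p i|^2) * (∑ i, Real.sqrt (M i i)^2) :=
              Finset.sum_mul_sq_le_sq_mul_sq _ _ _
          _ = (∑ i, p i ^ 2) * (∑ i, M i i) := by
              congr 1
              · exact Finset.sum_congr rfl fun i _ => sq_abs _
              · exact Finset.sum_congr rfl fun i _ => Real.sq_sqrt (hdiag i)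


lemma euclid_decomp {n : ℕ} (ξ : EuclideanSpace ℝ (Fin n)) :
    ∑ i, ξ i • EuclideanSpace.single i (1:ℝ) = ξ := by
  ext j
  rw [show ((∑ i, ξ i • EuclideanSpace.single i (1:ℝ)) j)
      = ∑ i, (ξ i • EuclideanSpace.single i (1:ℝ)) j from by
    rw [WithLp.ofLp_sum]; exact Finset.sum_apply _ _ _]
  simp [EuclideanSpace.single_apply]

lemma pd_pd_eq {n : ℕ} {h : EuclideanSpace ℝ (Fin n) → ℝ}
    {x0 : EuclideanSpace ℝ (Fin n)}
    (hd : DifferentiableAt ℝ (fderiv ℝ h) x0) (i j : Fin n) :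
    pd (pd h i) j x0
      = fderiv ℝ (fderiv ℝ h) x0 (EuclideanSpace.single j 1) (EuclideanSpace.single i 1) := by
  have hcomp := ((ContinuousLinearMap.apply ℝ ℝ
      (EuclideanSpace.single i (1:ℝ))).hasFDerivAt).comp x0 hd.hasFDerivAt
  have : fderiv ℝ (fun y => fderiv ℝ h y (EuclideanSpace.single i 1)) x0
      = (ContinuousLinearMap.apply ℝ ℝ (EuclideanSpace.single i (1:ℝ))).comp
        (fderiv ℝ (fderiv ℝ h) x0) := hcomp.fderiv
  show fderiv ℝ (fun y => fderiv ℝ h y (EuclideanSpace.single i 1)) x0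
      (EuclideanSpace.single j 1) = _
  rw [this]
  rfl

lemma clm2_expand {n : ℕ} (B : EuclideanSpace ℝ (Fin n) →L[ℝ]
    (EuclideanSpace ℝ (Fin n) →L[ℝ] ℝ)) (ξ : EuclideanSpace ℝ (Fin n)) :
    B ξ ξ = ∑ j, ∑ i, ξ j * ξ i * B (EuclideanSpace.single j 1) (EuclideanSpace.single i 1) := by
  have key : ∀ C : EuclideanSpace ℝ (Fin n) →L[ℝ] ℝ, C ξ = ∑ i, ξ i * C (EuclideanSpace.single i 1) := by
    intro C
    conv_lhs => rw [← euclid_decomp ξ]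
    rw [map_sum]
    exact Finset.sum_congr rfl fun i _ => by rw [map_smul]; rfl
  have h1 : B ξ = ∑ j, ξ j • B (EuclideanSpace.single j 1) := by
    conv_lhs => rw [← euclid_decomp ξ]
    rw [map_sum]
    exact Finset.sum_congr rfl fun j _ => by rw [map_smul]
  rw [h1, ContinuousLinearMap.sum_apply]
  apply Finset.sum_congr rfl
  intro j _
  rw [ContinuousLinearMap.smul_apply, key (B (EuclideanSpace.single j 1)), smul_eq_mul,
    Finset.mul_sum]
  exact Finset.sum_congr rfl fun i _ => by ring

lemma line_second {n : ℕ} {h : EuclideanSpace ℝ (Fin n) → ℝ}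
    {x0 : EuclideanSpace ℝ (Fin n)} {U : Set (EuclideanSpace ℝ (Fin n))}
    (hU : IsOpen U) (hx0 : x0 ∈ U) (hh : ContDiffOn ℝ 2 h U)
    (ξ : EuclideanSpace ℝ (Fin n)) :
    (∀ᶠ s in 𝓝 (0:ℝ), DifferentiableAt ℝ (fun s => h (x0 + s • ξ)) s) ∧
    DifferentiableAt ℝ (deriv (fun s => h (x0 + s • ξ))) (0:ℝ) ∧
    deriv (deriv (fun s => h (x0 + s • ξ))) (0:ℝ) = fderiv ℝ (fderiv ℝ h) x0 ξ ξ := by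
  set L : ℝ → EuclideanSpace ℝ (Fin n) := fun s => x0 + s • ξ with hLdef
  have hL : ∀ s : ℝ, HasDerivAt L ξ s := by
    intro s
    have := ((hasDerivAt_id s).smul_const ξ).const_add x0
    simpa [hLdef] using this
  have hL0 : L 0 = x0 := by simp [hLdef]
  have hLcont : Tendsto L (𝓝 0) (𝓝 x0) := by
    have := (hL 0).continuousAt
    rwa [ContinuousAt, hL0] at this
  have hhat : ∀ᶠ y in 𝓝 x0, ContDiffAt ℝ 2 h y :=
    eventually_of_mem (hU.mem_nhds hx0) (fun y hy => hh.contDiffAt (hU.mem_nhds hy))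
  have hCD : ∀ᶠ s in 𝓝 (0:ℝ), ContDiffAt ℝ 2 h (L s) := hLcont.eventually hhat
  have hψd : ∀ᶠ s in 𝓝 (0:ℝ),
      HasDerivAt (fun s => h (x0 + s • ξ)) (fderiv ℝ h (L s) ξ) s := by
    filter_upwards [hCD] with s hs
    have hdiff : DifferentiableAt ℝ h (L s) := hs.differentiableAt two_ne_zero
    exact hdiff.hasFDerivAt.comp_hasDerivAt s (hL s)
  have hev : deriv (fun s => h (x0 + s • ξ)) =ᶠ[𝓝 (0:ℝ)] fun s => fderiv ℝ h (L s) ξ :=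
    hψd.mono fun s hs => hs.deriv
  have hF : DifferentiableAt ℝ (fderiv ℝ h) x0 :=
    (((hh.contDiffAt (hU.mem_nhds hx0)).fderiv_right (m := 1)
      (by norm_num)).differentiableAt one_ne_zero)
  have hFc : HasDerivAt (fun s => fderiv ℝ h (L s)) (fderiv ℝ (fderiv ℝ h) x0 ξ) 0 := by
    have h1 : HasFDerivAt (fderiv ℝ h) (fderiv ℝ (fderiv ℝ h) x0) (L 0) := by
      rw [hL0]; exact hF.hasFDerivAt
    exact h1.comp_hasDerivAt 0 (hL 0)
  have happ : HasDerivAt (fun s => fderiv ℝ h (L s) ξ)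
      ((fderiv ℝ (fderiv ℝ h) x0 ξ) ξ) 0 := by
    have := hFc.clm_apply (hasDerivAt_const (0:ℝ) ξ)
    simpa using this
  refine ⟨hψd.mono fun s hs => hs.differentiableAt, ?_, ?_⟩
  · rw [hev.differentiableAt_iff]
    exact happ.differentiableAt
  · rw [hev.deriv_eq]
    exact happ.deriv

/-- parabolic comparison principle for `Q̃` on `U × (0,T]`. -/
theorem stmt16 {n : ℕ} (U : Set (EuclideanSpace ℝ (Fin n)))
    (hU : IsOpen U) (hbdd : Bornology.IsBounded U) (T : ℝ) (hT : 0 < T)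
    (w w' : EuclideanSpace ℝ (Fin n) → ℝ → ℝ)
    (hwx : ∀ t ∈ Set.Ioc 0 T, ContDiffOn ℝ 2 (fun y => w y t) U)
    (hw'x : ∀ t ∈ Set.Ioc 0 T, ContDiffOn ℝ 2 (fun y => w' y t) U)
    (hwt : ∀ x ∈ U, ∀ t ∈ Set.Ioc 0 T, DifferentiableAt ℝ (w x) t)
    (hw't : ∀ x ∈ U, ∀ t ∈ Set.Ioc 0 T, DifferentiableAt ℝ (w' x) t)
    (hwc : ContinuousOn (fun q : EuclideanSpace ℝ (Fin n) × ℝ => w q.1 q.2)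
      (closure (U ×ˢ Set.Ioc 0 T)))
    (hw'c : ContinuousOn (fun q : EuclideanSpace ℝ (Fin n) × ℝ => w' q.1 q.2)
      (closure (U ×ˢ Set.Ioc 0 T)))
    (hQ : ∀ x ∈ U, ∀ t ∈ Set.Ioc 0 T,
        deriv (w x) t - Qtil (fun y => w y t) x
          ≤ deriv (w' x) t - Qtil (fun y => w' y t) x)
    (hbdry : ∀ q ∈ closure (U ×ˢ Set.Ioc 0 T) \ U ×ˢ Set.Ioc 0 T,
        w q.1 q.2 ≤ w' q.1 q.2) :
    ∀ x ∈ U, ∀ t ∈ Set.Ioc 0 T, w x t ≤ w' x t := by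
  intro x hx t ht
  have key : ∀ ε : ℝ, 0 < ε → w x t - w' x t ≤ ε * T := by
    intro ε hε
    set K := closure (U ×ˢ Set.Ioc 0 T) with hKdef
    have hKcomp : IsCompact K := (hbdd.prod (Metric.isBounded_Ioc 0 T)).isCompact_closure
    set g : EuclideanSpace ℝ (Fin n) × ℝ → ℝ :=
      fun q => w q.1 q.2 - w' q.1 q.2 - ε * q.2 with hgdef
    have hgc : ContinuousOn g K :=
      (hwc.sub hw'c).sub ((continuous_const.mul continuous_snd).continuousOn)
    have hxtK : (x, t) ∈ U ×ˢ Set.Ioc 0 T := ⟨hx, ht⟩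
    obtain ⟨q0, hq0K, hq0max⟩ := hKcomp.exists_isMaxOn ⟨(x,t), subset_closure hxtK⟩ hgc
    have hg0 : g q0 ≤ 0 := by
      by_cases hint : q0 ∈ U ×ˢ Set.Ioc 0 T
      · exfalso
        obtain ⟨hx0, ht0⟩ := hint
        set x0 := q0.1 with hx0def
        set t0 := q0.2 with ht0def
        -- time derivative part
        have htderiv : ε ≤ deriv (w x0) t0 - deriv (w' x0) t0 := by
          have hdw := hwt x0 hx0 t0 ht0
          have hdw' := hw't x0 hx0 t0 ht0
          have hder : HasDerivAt (fun s => w x0 s - w' x0 s - ε * s)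
              (deriv (w x0) t0 - deriv (w' x0) t0 - ε * 1) t0 :=
            (hdw.hasDerivAt.sub hdw'.hasDerivAt).sub ((hasDerivAt_id t0).const_mul ε)
          have hmax : ∀ s ∈ Set.Ioc 0 t0,
              (fun s => w x0 s - w' x0 s - ε * s) s ≤
              (fun s => w x0 s - w' x0 s - ε * s) t0 := by
            intro s hs
            have hsK : (x0, s) ∈ K :=
              subset_closure ⟨hx0, ⟨hs.1, le_trans hs.2 ht0.2⟩⟩
            have h2 : g (x0, s) ≤ g q0 := hq0max hsK
            exact h2
          have h0 := deriv_nonneg_of_isMaxOn_Ioc ht0.1 hder.differentiableAt hmax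
          rw [hder.deriv] at h0
          linarith
        -- spatial part
        set f : EuclideanSpace ℝ (Fin n) → ℝ := fun y => w y t0 with hfdef
        set f' : EuclideanSpace ℝ (Fin n) → ℝ := fun y => w' y t0 with hf'def
        have hfc : ContDiffOn ℝ 2 f U := hwx t0 ht0
        have hf'c : ContDiffOn ℝ 2 f' U := hw'x t0 ht0
        have hvmax : IsLocalMax (fun y => f y - f' y) x0 := by
          filter_upwards [hU.mem_nhds hx0] with y hy
          have : (y, t0) ∈ U ×ˢ Set.Ioc 0 T := ⟨hy, ht0⟩
          have h2 : g (y, t0) ≤ g q0 := hq0max (subset_closure this)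
          have h3 : w y t0 - w' y t0 - ε * t0 ≤ w x0 t0 - w' x0 t0 - ε * t0 := h2
          simp only [hfdef, hf'def]
          linarith
        have hfd : DifferentiableAt ℝ f x0 :=
          (hfc.contDiffAt (hU.mem_nhds hx0)).differentiableAt two_ne_zero
        have hf'd : DifferentiableAt ℝ f' x0 :=
          (hf'c.contDiffAt (hU.mem_nhds hx0)).differentiableAt two_ne_zero
        have hgrad : fderiv ℝ f x0 = fderiv ℝ f' x0 := by
          have h0 : fderiv ℝ (fun y => f y - f' y) x0 = 0 := hvmax.fderiv_eq_zero
          rw [fderiv_fun_sub hfd hf'd] at h0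
          exact sub_eq_zero.mp h0
        have hFf : DifferentiableAt ℝ (fderiv ℝ f) x0 :=
          ((hfc.contDiffAt (hU.mem_nhds hx0)).fderiv_right (m := 1)
            (by norm_num)).differentiableAt one_ne_zero
        have hFf' : DifferentiableAt ℝ (fderiv ℝ f') x0 :=
          ((hf'c.contDiffAt (hU.mem_nhds hx0)).fderiv_right (m := 1)
            (by norm_num)).differentiableAt one_ne_zero
        -- Hessian difference is negative semidefinite along every direction
        have hq2 : ∀ ξ : EuclideanSpace ℝ (Fin n),
            fderiv ℝ (fderiv ℝ f) x0 ξ ξ - fderiv ℝ (fderiv ℝ f') x0 ξ ξ ≤ 0 := by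
          intro ξ
          obtain ⟨hf1, hf2, hf3⟩ := line_second hU hx0 hfc ξ
          obtain ⟨hg1, hg2, hg3⟩ := line_second hU hx0 hf'c ξ
          rw [← hf3, ← hg3]
          have hφev : deriv (fun s => f (x0 + s • ξ) - f' (x0 + s • ξ)) =ᶠ[𝓝 (0:ℝ)]
              fun s => deriv (fun s => f (x0 + s • ξ)) s
                - deriv (fun s => f' (x0 + s • ξ)) s := by
            filter_upwards [hf1, hg1] with s hfs hgs
            exact deriv_sub hfs hgs
          have hLcont : Tendsto (fun s : ℝ => x0 + s • ξ) (𝓝 0) (𝓝 x0) := by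
            have h1 := (((hasDerivAt_id (0:ℝ)).smul_const ξ).const_add x0).continuousAt
            rw [ContinuousAt] at h1
            simpa using h1
          have hmaxφ : IsLocalMax (fun s => f (x0 + s • ξ) - f' (x0 + s • ξ)) (0:ℝ) := by
            have h1 := hLcont.eventually hvmax
            filter_upwards [h1] with s hs
            simpa using hs
          have hD2 := secondDeriv_nonpos_of_isLocalMax
            (φ := fun s => f (x0 + s • ξ) - f' (x0 + s • ξ))
            (by filter_upwards [hf1, hg1] with s hfs hgs; exact hfs.sub hgs)
            (by rw [hφev.differentiableAt_iff]; exact hf2.sub hg2)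
            hmaxφ
          rw [hφev.deriv_eq, deriv_fun_sub hf2 hg2] at hD2
          exact hD2
        -- coordinates
        set P : Fin n → ℝ := fun i => pd f i x0 with hPdef
        set A : Fin n → Fin n → ℝ := fun i j => pd (pd f i) j x0 with hAdef
        set C : Fin n → Fin n → ℝ := fun i j => pd (pd f' i) j x0 with hCdef
        have hgradsame : ∀ i, pd f' i x0 = P i := by
          intro i
          simp only [hPdef, pd, hgrad]
        have hA : ∀ i j, fderiv ℝ (fderiv ℝ f) x0 (EuclideanSpace.single j 1)
            (EuclideanSpace.single i 1) = A i j := fun i j => (pd_pd_eq hFf i j).symm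
        have hC : ∀ i j, fderiv ℝ (fderiv ℝ f') x0 (EuclideanSpace.single j 1)
            (EuclideanSpace.single i 1) = C i j := fun i j => (pd_pd_eq hFf' i j).symm
        have hpsd : ∀ ξc : Fin n → ℝ,
            0 ≤ ∑ a, ∑ b, ξc a * ξc b * (C b a - A b a) := by
          intro ξc
          set ξ : EuclideanSpace ℝ (Fin n) := (WithLp.equiv 2 (Fin n → ℝ)).symm ξc with hξdef
          have hξ : ∀ i, ξ i = ξc i := fun i => rfl
          have h2 := hq2 ξ
          rw [clm2_expand (fderiv ℝ (fderiv ℝ f) x0) ξ,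
            clm2_expand (fderiv ℝ (fderiv ℝ f') x0) ξ] at h2
          have hrw1 : ∑ j, ∑ i, ξ j * ξ i * fderiv ℝ (fderiv ℝ f) x0
              (EuclideanSpace.single j 1) (EuclideanSpace.single i 1)
              = ∑ j, ∑ i, ξc j * ξc i * A i j :=
            Finset.sum_congr rfl fun j _ => Finset.sum_congr rfl fun i _ => by
              rw [hA, hξ, hξ]
          have hrw2 : ∑ j, ∑ i, ξ j * ξ i * fderiv ℝ (fderiv ℝ f') x0
              (EuclideanSpace.single j 1) (EuclideanSpace.single i 1)
              = ∑ j, ∑ i, ξc j * ξc i * C i j :=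
            Finset.sum_congr rfl fun j _ => Finset.sum_congr rfl fun i _ => by
              rw [hC, hξ, hξ]
          rw [hrw1, hrw2] at h2
          have hsplit : ∑ a, ∑ b, ξc a * ξc b * (C b a - A b a)
              = (∑ a, ∑ b, ξc a * ξc b * C b a) - ∑ a, ∑ b, ξc a * ξc b * A b a := by
            rw [← Finset.sum_sub_distrib]
            apply Finset.sum_congr rfl
            intro a _
            rw [← Finset.sum_sub_distrib]
            exact Finset.sum_congr rfl fun b _ => by ring
          rw [hsplit]
          linarith
        have htrnn : 0 ≤ ∑ a, (C a a - A a a) := by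
          apply Finset.sum_nonneg
          intro a _
          have := hpsd (Pi.single a 1)
          simpa [Pi.single_apply, Finset.sum_ite_eq', ite_and] using this
        have hqM := psd_quadratic_le_trace (fun a b => C b a - A b a) P hpsd
        -- identify sums with Qop ingredients
        have hG : gradNormSq f x0 = ∑ i, P i ^ 2 := rfl
        have hGnn : 0 ≤ ∑ i, P i ^ 2 := Finset.sum_nonneg fun i _ => sq_nonneg _
        have hGN : gradNormSq f' x0 = ∑ i, P i ^ 2 := by
          unfold gradNormSq
          exact Finset.sum_congr rfl fun i _ => by rw [hgradsame]
        have hswap : ∑ a, ∑ b, P a * P b * (C b a - A b a)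
            = (∑ i, ∑ j, C i j * P i * P j) - ∑ i, ∑ j, A i j * P i * P j := by
          have h1 : ∑ a, ∑ b, P a * P b * (C b a - A b a)
              = (∑ a, ∑ b, P a * P b * C b a) - ∑ a, ∑ b, P a * P b * A b a := by
            rw [← Finset.sum_sub_distrib]
            apply Finset.sum_congr rfl
            intro a _
            rw [← Finset.sum_sub_distrib]
            exact Finset.sum_congr rfl fun b _ => by ring
          rw [h1]
          congr 1
          · rw [Finset.sum_comm]
            exact Finset.sum_congr rfl fun i _ => Finset.sum_congr rfl fun j _ => by ring
          · rw [Finset.sum_comm]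
            exact Finset.sum_congr rfl fun i _ => Finset.sum_congr rfl fun j _ => by ring
        have htr : ∑ a, (C a a - A a a) = (∑ i, C i i) - ∑ i, A i i :=
          Finset.sum_sub_distrib _ _
        -- Qop comparison
        set G := ∑ i, P i ^ 2 with hGdef
        have h1G : (0:ℝ) < 1 + G := by linarith
        have hQople : Qop f x0 ≤ Qop f' x0 := by
          have hQf : Qop f x0 = (∑ i, A i i)
              - (∑ i, ∑ j, A i j * P i * P j) / (1 + G) + G := by
            rw [Qop, hG]
          have hQf' : Qop f' x0 = (∑ i, C i i)
              - (∑ i, ∑ j, C i j * P i * P j) / (1 + G) + G := by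
            rw [Qop, hGN]
            rw [show (∑ i, ∑ j, pd (pd f' i) j x0 * pd f' i x0 * pd f' j x0)
                = ∑ i, ∑ j, C i j * P i * P j from
              Finset.sum_congr rfl fun i _ => Finset.sum_congr rfl fun j _ => by
                rw [hgradsame, hgradsame]]
          rw [hQf, hQf']
          have hD : 0 ≤ (∑ i, C i i) - ∑ i, A i i := htr ▸ htrnn
          have hqle : (∑ i, ∑ j, C i j * P i * P j) - (∑ i, ∑ j, A i j * P i * P j)
              ≤ (1 + G) * ((∑ i, C i i) - ∑ i, A i i) := by
            rw [← hswap]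
            calc ∑ a, ∑ b, P a * P b * (C b a - A b a)
                ≤ G * ∑ a, (C a a - A a a) := hqM
              _ = G * ((∑ i, C i i) - ∑ i, A i i) := by rw [htr]
              _ ≤ (1 + G) * ((∑ i, C i i) - ∑ i, A i i) := by nlinarith
          have hdivle : ((∑ i, ∑ j, C i j * P i * P j)
              - ∑ i, ∑ j, A i j * P i * P j) / (1 + G)
              ≤ (∑ i, C i i) - ∑ i, A i i := by
            rw [div_le_iff₀ h1G]
            linarith [hqle]
          have := sub_div (∑ i, ∑ j, C i j * P i * P j)
            (∑ i, ∑ j, A i j * P i * P j) (1 + G)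
          rw [this] at hdivle
          linarith
        have hQtille : Qtil f x0 ≤ Qtil f' x0 := by
          have hsq : (0:ℝ) < Real.sqrt (1 + G) := Real.sqrt_pos.2 h1G
          rw [Qtil, Qtil, hGN, hG]
          exact (div_le_div_iff_of_pos_right hsq).2 hQople
        have hQ0 := hQ x0 hx0 t0 ht0
        rw [← hfdef, ← hf'def] at hQ0
        linarith
      · have hb := hbdry q0 ⟨hq0K, hint⟩
        have ht0' : q0 ∈ closure U ×ˢ closure (Set.Ioc 0 T) := by
          rw [← closure_prod_eq]; exact hq0K
        have ht0 : 0 ≤ q0.2 := by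
          have h2 := ht0'.2
          rw [closure_Ioc hT.ne] at h2
          exact h2.1
        have hb' : w q0.1 q0.2 - w' q0.1 q0.2 ≤ 0 := by linarith
        show w q0.1 q0.2 - w' q0.1 q0.2 - ε * q0.2 ≤ 0
        nlinarith [mul_nonneg hε.le ht0]
    have hfin : w x t - w' x t - ε * t ≤ g q0 := hq0max (subset_closure hxtK)
    have ht' : t ≤ T := ht.2
    have ht0 : 0 < t := ht.1
    nlinarith [hfin, hg0]
  by_contra hlt
  push_neg at hlt
  have hpos : 0 < (w x t - w' x t) := by linarith
  have h2 := key ((w x t - w' x t)/(2*T)) (by positivity)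
  have h3 : (w x t - w' x t)/(2*T) * T = (w x t - w' x t)/2 := by
    field_simp
  rw [h3] at h2
  linarith
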